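/- Suppose the price functions are affine, P_j(d) = α_j − β_j d with β_j > 0, and Assumption A2 holds (each row of H ∈ {0,1}^{n×m} has exactly one nonzero entry). Then the function Φ(f, q) = w(f, q) − (1/2) Σ_{j=1}^m β_j (Hᵀ q²)_j, where q² denotes the coordinatewise square, satisfies ∂Φ/∂q_i = ∂u_i/∂q_i for every producer i, for all q ∈ ℝ₊^n and all f. -/

import Mathlib

open Finset intervalIntegral

/-- With affine prices `P j d = α j − β j * d` (`β j > 0`) and A2, the function
`Φ(f, q) = w(f, q) − (1/2) Σ_j β j (Hᵀ q²)_j` satisfies `∂Φ/∂qᵢ = ∂uᵢ/∂qᵢ` for every producer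
`i`, for all `q ∈ ℝ₊ⁿ` and all `f`. -/
theorem stmt4 {n m l : ℕ}
    (B : Fin m → Fin l → ℝ) (H : Fin n → Fin m → ℝ)
    (α β : Fin m → ℝ) (hβ : ∀ j, 0 < β j)
    (C : Fin n → ℝ → ℝ) (hC : ∀ i, Differentiable ℝ (C i))
    -- Assumption A2: each row of H has exactly one entry equal to 1, the rest 0
    (hH01 : ∀ i j, H i j = 0 ∨ H i j = 1)
    (hH1 : ∀ i, ∑ j, H i j = 1)
    -- affine price functions
    (P : Fin m → ℝ → ℝ) (hP : ∀ j d, P j d = α j - β j * d)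
    (i : Fin n) (q : Fin n → ℝ) (hq : ∀ i', 0 ≤ q i') (f : Fin l → ℝ) :
    deriv (fun x : ℝ =>
        -- Φ(f, q) with q i replaced by x
        ((∑ j, ∫ s in (0 : ℝ)..((∑ k, B j k * f k) + ∑ i', H i' j * Function.update q i x i'),
            P j s)
          - ∑ i', C i' (Function.update q i x i')
          - (1 / 2) * ∑ j, β j * ∑ i', H i' j * (Function.update q i x i') ^ 2)) (q i)
    = deriv (fun x : ℝ =>
        -- uᵢ(f, q) with q i replaced by x
        (x * (∑ j, H i j *
              P j ((∑ k, B j k * f k) + ∑ i', H i' j * Function.update q i x i'))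
          - C i x)) (q i) := by
  classical
  set a : ℝ := q i with ha
  set c : Fin m → ℝ :=
    fun j => (∑ k, B j k * f k) + ∑ i' ∈ Finset.univ.erase i, H i' j * q i' with hc
  set K : ℝ := ∑ i' ∈ Finset.univ.erase i, C i' (q i') with hK
  set e : Fin m → ℝ := fun j => ∑ i' ∈ Finset.univ.erase i, H i' j * (q i') ^ 2 with he
  have hsplit : ∀ (g : Fin n → ℝ → ℝ) (x : ℝ),
      ∑ i', g i' (Function.update q i x i')
        = g i x + ∑ i' ∈ Finset.univ.erase i, g i' (q i') := by
    intro g x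
    rw [← Finset.add_sum_erase _ (fun i' => g i' (Function.update q i x i')) (Finset.mem_univ i),
      Function.update_self]
    refine congrArg _ (Finset.sum_congr rfl fun i' hi' => ?_)
    rw [Function.update_of_ne (Finset.ne_of_mem_erase hi')]
  have hint : ∀ (j : Fin m) (t : ℝ),
      (∫ s in (0:ℝ)..t, P j s) = α j * t - β j * (t ^ 2 / 2) := by
    intro j t
    have h1 : (∫ s in (0:ℝ)..t, P j s) = ∫ s in (0:ℝ)..t, (α j - β j * s) := by
      simp only [hP]
    rw [h1, intervalIntegral.integral_sub (f := fun _ => α j) (g := fun s => β j * s) intervalIntegrable_const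
        ((continuous_const.mul continuous_id : Continuous fun s : ℝ => β j * s).intervalIntegrable
          _ _),
      intervalIntegral.integral_const, intervalIntegral.integral_const_mul, integral_id]
    simp
    ring
  -- explicit polynomial form of Φ as a function of x
  have hLfun : (fun x : ℝ =>
      ((∑ j, ∫ s in (0 : ℝ)..((∑ k, B j k * f k) + ∑ i', H i' j * Function.update q i x i'),
          P j s)
        - ∑ i', C i' (Function.update q i x i')
        - (1 / 2) * ∑ j, β j * ∑ i', H i' j * (Function.update q i x i') ^ 2))
      = fun x : ℝ =>
        (∑ j, (α j * (c j + H i j * x) - β j * ((c j + H i j * x) ^ 2 / 2)))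
          - (C i x + K) - (1 / 2) * ∑ j, β j * (H i j * x ^ 2 + e j) := by
    funext x
    have h1 : ∀ j : Fin m,
        (∑ k, B j k * f k) + ∑ i', H i' j * Function.update q i x i' = c j + H i j * x := by
      intro j
      rw [hsplit (fun i' y => H i' j * y) x, hc]
      ring
    congr 1
    · congr 1
      · exact Finset.sum_congr rfl fun j _ => by rw [h1 j, hint]
      · rw [hsplit (fun i' y => C i' y) x, hK]
    · refine congrArg _ (Finset.sum_congr rfl fun j _ => ?_)
      rw [hsplit (fun i' y => H i' j * y ^ 2) x, he]
  -- explicit polynomial form of uᵢ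
  have hRfun : (fun x : ℝ =>
      (x * (∑ j, H i j *
            P j ((∑ k, B j k * f k) + ∑ i', H i' j * Function.update q i x i'))
        - C i x))
      = fun x : ℝ => x * (∑ j, H i j * (α j - β j * (c j + H i j * x))) - C i x := by
    funext x
    have h1 : ∀ j : Fin m,
        (∑ k, B j k * f k) + ∑ i', H i' j * Function.update q i x i' = c j + H i j * x := by
      intro j
      rw [hsplit (fun i' y => H i' j * y) x, hc]
      ring
    congr 1
    refine congrArg _ (Finset.sum_congr rfl fun j _ => ?_)
    rw [hP, h1 j]
  -- derivative of each coordinate map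
  have hD : ∀ j : Fin m, HasDerivAt (fun x : ℝ => c j + H i j * x) (H i j) a := by
    intro j
    simpa using ((hasDerivAt_id a).const_mul (H i j)).const_add (c j)
  -- derivative of Φ
  have hA : ∀ j : Fin m, HasDerivAt
      (fun x : ℝ => α j * (c j + H i j * x) - β j * ((c j + H i j * x) ^ 2 / 2))
      (H i j * (α j - β j * (c j + H i j * a))) a := by
    intro j
    have h := ((hD j).const_mul (α j)).sub ((((hD j).pow 2).div_const 2).const_mul (β j))
    refine h.congr_deriv ?_
    norm_num
    ring
  have hPen : ∀ j : Fin m, HasDerivAt (fun x : ℝ => β j * (H i j * x ^ 2 + e j))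
      (β j * (H i j * (2 * a))) a := by
    intro j
    have h := (((hasDerivAt_pow 2 a).const_mul (H i j)).add_const (e j)).const_mul (β j)
    refine h.congr_deriv ?_
    norm_num
  have hLder : HasDerivAt (fun x : ℝ =>
      (∑ j, (α j * (c j + H i j * x) - β j * ((c j + H i j * x) ^ 2 / 2)))
        - (C i x + K) - (1 / 2) * ∑ j, β j * (H i j * x ^ 2 + e j))
      ((∑ j, H i j * (α j - β j * (c j + H i j * a))) - deriv (C i) a
        - (1 / 2) * ∑ j, β j * (H i j * (2 * a))) a := by
    exact ((HasDerivAt.fun_sum fun j _ => hA j).sub (((hC i) a).hasDerivAt.add_const K)).sub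
      ((HasDerivAt.fun_sum fun j _ => hPen j).const_mul (1 / 2))
  -- derivative of uᵢ
  have hS : HasDerivAt (fun x : ℝ => ∑ j, H i j * (α j - β j * (c j + H i j * x)))
      (∑ j, H i j * (-(β j * H i j))) a := by
    refine HasDerivAt.fun_sum fun j _ => ?_
    exact (((hD j).const_mul (β j)).const_sub (α j)).const_mul (H i j)
  have hRder : HasDerivAt
      (fun x : ℝ => x * (∑ j, H i j * (α j - β j * (c j + H i j * x))) - C i x)
      (1 * (∑ j, H i j * (α j - β j * (c j + H i j * a))) + a * ∑ j, H i j * (-(β j * H i j))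
        - deriv (C i) a) a :=
    ((hasDerivAt_id a).mul hS).sub ((hC i) a).hasDerivAt
  rw [hLfun, hRfun, hLder.deriv, hRder.deriv]
  have key : ((∑ j, H i j * (α j - β j * (c j + H i j * a)))
        - (1 / 2) * ∑ j, β j * (H i j * (2 * a)))
      = 1 * (∑ j, H i j * (α j - β j * (c j + H i j * a)))
        + a * ∑ j, H i j * (-(β j * H i j)) := by
    rw [Finset.mul_sum, Finset.mul_sum, Finset.mul_sum, ← Finset.sum_sub_distrib,
      ← Finset.sum_add_distrib]
    refine Finset.sum_congr rfl fun j _ => ?_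
    rcases hH01 i j with h | h <;> rw [h] <;> ring
  linarith [key]
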